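/- arXiv:2311.06257 — 3 statements merged into one kernel-verified Lean document; each statement's English description precedes it below -/
import Mathlib

section
/- (Theorem 3.2(b), Euclidean case.) Let p̄ ∈ F and suppose ψ_u : E → ℝ (u = 1,…,t) are convex at p̄ and directionally differentiable at p̄. Suppose the interval-valued objectives φ_s (s = 1,…,l) are CW-convex at p̄ and weakly directionally differentiable at p̄, and that there exist scalars λ_s^C > 0, λ_s^W > 0 (s = 1,…,l) and μ_u ≥ 0 (u = 1,…,t) such that: (i) for all p ∈ E, Σ_{s=1}^l λ_s^C (φ_s^C)'(p̄; p − p̄) + Σ_{s=1}^l λ_s^W (φ_s^W)'(p̄; p − p̄) + Σ_{u=1}^t μ_u ψ_u'(p̄; p − p̄) ≥ 0; and (ii) μ_u ψ_u(p̄) = 0 for all u. Then p̄ is a type-II Pareto optimal solution of (MIVOP2). -/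
/-- One-sided directional derivative of `f` at `p` in direction `w`, with value `d`. -/
def HasDirDeriv {V : Type*} [NormedAddCommGroup V] [NormedSpace ℝ V]
    (f : V → ℝ) (p w : V) (d : ℝ) : Prop :=
  Filter.Tendsto (fun α : ℝ => (f (p + α • w) - f p) / α)
    (nhdsWithin 0 (Set.Ioi 0)) (nhds d)

/-- `f` is convex at the point `p` (relative to the convex set `E`). -/
def ConvexAtPt {V : Type*} [NormedAddCommGroup V] [NormedSpace ℝ V]
    (E : Set V) (f : V → ℝ) (p : V) : Prop :=
  ∀ q ∈ E, ∀ α : ℝ, 0 ≤ α → α ≤ 1 →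
    f ((1 - α) • p + α • q) ≤ (1 - α) * f p + α * f q

/-- `f` (with directional-derivative function `f'` at `pbar`) is pseudo-convex at `pbar`. -/
def PseudoConvexAt {V : Type*} [NormedAddCommGroup V] [NormedSpace ℝ V]
    (E : Set V) (f : V → ℝ) (f' : V → ℝ) (pbar : V) : Prop :=
  ∀ p ∈ E, f p < f pbar → f' (p - pbar) < 0

/-- `f` (with directional-derivative function `f'` at `pbar`) is strictly
pseudo-convex at `pbar`. -/
def StrictPseudoConvexAt {V : Type*} [NormedAddCommGroup V] [NormedSpace ℝ V]
    (E : Set V) (f : V → ℝ) (f' : V → ℝ) (pbar : V) : Prop :=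
  ∀ p ∈ E, p ≠ pbar → f p ≤ f pbar → f' (p - pbar) < 0

/-- `[aL, aU] ≤_LU [bL, bU]`. -/
def LUle (aL aU bL bU : ℝ) : Prop := aL ≤ bL ∧ aU ≤ bU

/-- `[aL, aU] <_LU [bL, bU]`. -/
def LUlt (aL aU bL bU : ℝ) : Prop := LUle aL aU bL bU ∧ (aL ≠ bL ∨ aU ≠ bU)

/-- `[aL, aU] ≤_CW [bL, bU]`. -/
def CWle (aL aU bL bU : ℝ) : Prop :=
  (aL + aU) / 2 ≤ (bL + bU) / 2 ∧ (aU - aL) / 2 ≤ (bU - bL) / 2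

/-- `[aL, aU] <_CW [bL, bU]`. -/
def CWlt (aL aU bL bU : ℝ) : Prop := CWle aL aU bL bU ∧ (aL ≠ bL ∨ aU ≠ bU)

lemma hasDirDeriv_avg_add {V : Type*} [NormedAddCommGroup V] [NormedSpace ℝ V]
    {f g : V → ℝ} {p w : V} {df dg : ℝ}
    (hf : HasDirDeriv f p w df) (hg : HasDirDeriv g p w dg) :
    HasDirDeriv (fun x => (f x + g x) / 2) p w ((df + dg) / 2) := by
  have h := (hf.add hg).div_const 2
  refine h.congr fun α => by ring

lemma hasDirDeriv_avg_sub {V : Type*} [NormedAddCommGroup V] [NormedSpace ℝ V]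
    {f g : V → ℝ} {p w : V} {df dg : ℝ}
    (hf : HasDirDeriv f p w df) (hg : HasDirDeriv g p w dg) :
    HasDirDeriv (fun x => (g x - f x) / 2) p w ((dg - df) / 2) := by
  have h := (hg.sub hf).div_const 2
  refine h.congr fun α => by ring

lemma dirDeriv_le_of_convexAt {V : Type*} [NormedAddCommGroup V] [NormedSpace ℝ V]
    {E : Set V} {f : V → ℝ} {pbar q : V} (hq : q ∈ E)
    (hc : ConvexAtPt E f pbar) {d : ℝ}
    (hd : HasDirDeriv f pbar (q - pbar) d) : d ≤ f q - f pbar := by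
  refine le_of_tendsto hd ?_
  filter_upwards [Ioc_mem_nhdsGT_of_mem
    (by norm_num : (0:ℝ) ∈ Set.Ico (0:ℝ) 1)] with α hα
  have h1 : pbar + α • (q - pbar) = (1 - α) • pbar + α • q := by
    rw [smul_sub, sub_smul, one_smul]; abel
  have h2 := hc q hq α hα.1.le hα.2
  rw [← h1] at h2
  rw [div_le_iff₀ hα.1]
  nlinarith [h2]

/-- Theorem 3.2(b), Euclidean case: CW-convex KKT sufficiency for
type-II Pareto optimal solutions of (MIVOP2). -/
theorem kkt_type_II_CW_convex
    {V : Type*} [NormedAddCommGroup V] [NormedSpace ℝ V]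
    (E : Set V) (hEne : E.Nonempty) (hEopen : IsOpen E) (hEconv : Convex ℝ E)
    (l t : ℕ) (φL φU : Fin l → V → ℝ) (ψ : Fin t → V → ℝ)
    (hφint : ∀ s, ∀ x ∈ E, φL s x ≤ φU s x)
    (pbar : V) (hpbarE : pbar ∈ E) (hpbarF : ∀ u, ψ u pbar ≤ 0)
    (φL' φU' : Fin l → V → ℝ)
    (hφLd : ∀ s w, HasDirDeriv (φL s) pbar w (φL' s w))
    (hφUd : ∀ s w, HasDirDeriv (φU s) pbar w (φU' s w))
    (ψ' : Fin t → V → ℝ)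
    (hψd : ∀ u w, HasDirDeriv (ψ u) pbar w (ψ' u w))
    -- CW-convexity of the objectives at `pbar`
    (hφCc : ∀ s, ConvexAtPt E (fun x => (φL s x + φU s x) / 2) pbar)
    (hφWc : ∀ s, ConvexAtPt E (fun x => (φU s x - φL s x) / 2) pbar)
    (hψc : ∀ u, ConvexAtPt E (ψ u) pbar)
    (lamC lamW : Fin l → ℝ) (μ : Fin t → ℝ)
    (hlamC : ∀ s, 0 < lamC s) (hlamW : ∀ s, 0 < lamW s) (hμ : ∀ u, 0 ≤ μ u)
    (hkkt : ∀ p ∈ E,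
      0 ≤ ∑ s, lamC s * ((φL' s (p - pbar) + φU' s (p - pbar)) / 2)
          + ∑ s, lamW s * ((φU' s (p - pbar) - φL' s (p - pbar)) / 2)
          + ∑ u, μ u * ψ' u (p - pbar))
    (hcs : ∀ u, μ u * ψ u pbar = 0) :
    ¬ ∃ phat, (phat ∈ E ∧ ∀ u, ψ u phat ≤ 0) ∧
      (∀ s, CWle (φL s phat) (φU s phat) (φL s pbar) (φU s pbar)) ∧
      (∃ h, CWlt (φL h phat) (φU h phat) (φL h pbar) (φU h pbar)) := by
  rintro ⟨phat, ⟨hpE, hpF⟩, hle, h, hlth⟩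
  set w := phat - pbar with hw
  -- directional derivative bounds from convexity
  have hC : ∀ s, (φL' s w + φU' s w) / 2 ≤
      (φL s phat + φU s phat) / 2 - (φL s pbar + φU s pbar) / 2 := fun s =>
    dirDeriv_le_of_convexAt hpE (hφCc s)
      (hasDirDeriv_avg_add (hφLd s w) (hφUd s w))
  have hW : ∀ s, (φU' s w - φL' s w) / 2 ≤
      (φU s phat - φL s phat) / 2 - (φU s pbar - φL s pbar) / 2 := fun s =>
    dirDeriv_le_of_convexAt hpE (hφWc s)
      (hasDirDeriv_avg_sub (hφLd s w) (hφUd s w))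
  have hPsi : ∀ u, ψ' u w ≤ ψ u phat - ψ u pbar := fun u =>
    dirDeriv_le_of_convexAt hpE (hψc u) (hψd u w)
  -- sign information from CW-ordering
  have hΔC : ∀ s, (φL s phat + φU s phat) / 2 - (φL s pbar + φU s pbar) / 2 ≤ 0 :=
    fun s => by have := (hle s).1; linarith
  have hΔW : ∀ s, (φU s phat - φL s phat) / 2 - (φU s pbar - φL s pbar) / 2 ≤ 0 :=
    fun s => by have := (hle s).2; linarith
  obtain ⟨hleh, hneh⟩ := hlth
  have hstrict : (φL h phat + φU h phat) / 2 - (φL h pbar + φU h pbar) / 2 < 0 ∨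
      (φU h phat - φL h phat) / 2 - (φU h pbar - φL h pbar) / 2 < 0 := by
    by_contra hcon
    push_neg at hcon
    have e1 : (φL h phat + φU h phat) / 2 - (φL h pbar + φU h pbar) / 2 = 0 :=
      le_antisymm (hΔC h) hcon.1
    have e2 : (φU h phat - φL h phat) / 2 - (φU h pbar - φL h pbar) / 2 = 0 :=
      le_antisymm (hΔW h) hcon.2
    rcases hneh with hne | hne
    · exact hne (by linarith)
    · exact hne (by linarith)
  -- combine
  have hkkt' := hkkt phat hpE
  have hS1 : ∑ s, lamC s * ((φL' s w + φU' s w) / 2) ≤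
      ∑ s, lamC s * ((φL s phat + φU s phat) / 2 - (φL s pbar + φU s pbar) / 2) :=
    Finset.sum_le_sum fun s _ => mul_le_mul_of_nonneg_left (hC s) (hlamC s).le
  have hS2 : ∑ s, lamW s * ((φU' s w - φL' s w) / 2) ≤
      ∑ s, lamW s * ((φU s phat - φL s phat) / 2 - (φU s pbar - φL s pbar) / 2) :=
    Finset.sum_le_sum fun s _ => mul_le_mul_of_nonneg_left (hW s) (hlamW s).le
  have hS3 : ∑ u, μ u * ψ' u w ≤ 0 := by
    have : ∀ u ∈ Finset.univ, μ u * ψ' u w ≤ (0 : ℝ) := by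
      intro u _
      have h1 : μ u * ψ' u w ≤ μ u * (ψ u phat - ψ u pbar) :=
        mul_le_mul_of_nonneg_left (hPsi u) (hμ u)
      have h2 : μ u * ψ u phat ≤ 0 := mul_nonpos_of_nonneg_of_nonpos (hμ u) (hpF u)
      have h3 := hcs u
      nlinarith
    calc ∑ u, μ u * ψ' u w ≤ ∑ _u : Fin t, (0:ℝ) := Finset.sum_le_sum this
    _ = 0 := by simp
  -- the objective part is strictly negative
  have hneg : ∑ s, lamC s * ((φL s phat + φU s phat) / 2 - (φL s pbar + φU s pbar) / 2)
      + ∑ s, lamW s * ((φU s phat - φL s phat) / 2 - (φU s pbar - φL s pbar) / 2) < 0 := by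
    have hA : ∀ s ∈ Finset.univ,
        lamC s * ((φL s phat + φU s phat) / 2 - (φL s pbar + φU s pbar) / 2) ≤ 0 :=
      fun s _ => mul_nonpos_of_nonneg_of_nonpos (hlamC s).le (hΔC s)
    have hB : ∀ s ∈ Finset.univ,
        lamW s * ((φU s phat - φL s phat) / 2 - (φU s pbar - φL s pbar) / 2) ≤ 0 :=
      fun s _ => mul_nonpos_of_nonneg_of_nonpos (hlamW s).le (hΔW s)
    have hAle : ∑ s, lamC s * ((φL s phat + φU s phat) / 2 - (φL s pbar + φU s pbar) / 2)
        ≤ 0 := by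
      calc _ ≤ ∑ _s : Fin l, (0:ℝ) := Finset.sum_le_sum hA
      _ = 0 := by simp
    have hBle : ∑ s, lamW s * ((φU s phat - φL s phat) / 2 - (φU s pbar - φL s pbar) / 2)
        ≤ 0 := by
      calc _ ≤ ∑ _s : Fin l, (0:ℝ) := Finset.sum_le_sum hB
      _ = 0 := by simp
    rcases hstrict with hs | hs
    · have : ∑ s, lamC s * ((φL s phat + φU s phat) / 2 - (φL s pbar + φU s pbar) / 2)
          < 0 := by
        have := Finset.sum_lt_sum hA ⟨h, Finset.mem_univ h,
          mul_neg_of_pos_of_neg (hlamC h) hs⟩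
        simpa using this
      linarith
    · have : ∑ s, lamW s * ((φU s phat - φL s phat) / 2 - (φU s pbar - φL s pbar) / 2)
          < 0 := by
        have := Finset.sum_lt_sum hB ⟨h, Finset.mem_univ h,
          mul_neg_of_pos_of_neg (hlamW h) hs⟩
        simpa using this
      linarith
  linarith
end

section
/- (Theorem 3.3, Euclidean case.) Let ψ_u : E → ℝ (u = 1,…,t) be convex on the nonempty open convex set E ⊆ V and directionally differentiable at p̄ ∈ F, and let the interval-valued objectives φ_s (s = 1,…,l) be LU-convex at p̄ and weakly directionally differentiable at p̄. Assume t ≥ 2l and let {Q_1, …, Q_{2l}} be a decomposition of {1,…,t} into 2l nonempty pairwise disjoint subsets whose union is {1,…,t}. Suppose there exist scalars μ_u ≥ 0 (u = 1,…,t) such that for every p ∈ E and every s = 1,…,l: (i) (φ_s^L)'(p̄; p − p̄) + Σ_{u ∈ Q_s} μ_u ψ_u'(p̄; p − p̄) ≥ 0; (ii) (φ_s^U)'(p̄; p − p̄) + Σ_{u ∈ Q_{s+l}} μ_u ψ_u'(p̄; p − p̄) ≥ 0; and (iii) μ_u ψ_u(p̄) = 0 for all u. Then p̄ is a type-I Pareto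 optimal solution of (MIVOP2). -/

private lemma dirDeriv_le_sub {V : Type*} [NormedAddCommGroup V] [NormedSpace ℝ V]
    {E : Set V} {f : V → ℝ} {p q : V} (hq : q ∈ E)
    (hc : ConvexAtPt E f p) {d : ℝ} (hd : HasDirDeriv f p (q - p) d) :
    d ≤ f q - f p := by
  refine le_of_tendsto hd ?_
  filter_upwards [self_mem_nhdsWithin,
    Ioo_mem_nhdsGT_of_mem (Set.mem_Ico.2 ⟨le_refl (0:ℝ), one_pos⟩)] with α hα1 hα2
  have hα : (0:ℝ) < α := hα1
  have h := hc q hq α hα.le hα2.2.le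
  have heq : p + α • (q - p) = (1 - α) • p + α • q := by
    rw [smul_sub, sub_smul, one_smul]; abel
  rw [heq, div_le_iff₀ hα]
  nlinarith [h]

/-- Theorem 3.3, Euclidean case: KKT sufficiency for type-I Pareto
optimal solutions using a decomposition `{Q_1, …, Q_{2l}}` of the constraint
index set. For `s : Fin l`, `Q_s` is `Q (Fin.castAdd l s)` and `Q_{s+l}` is
`Q (Fin.natAdd l s)`. -/
theorem kkt_type_I_decomposition
    {V : Type*} [NormedAddCommGroup V] [NormedSpace ℝ V]
    (E : Set V) (hEne : E.Nonempty) (hEopen : IsOpen E) (hEconv : Convex ℝ E)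
    (l t : ℕ) (φL φU : Fin l → V → ℝ) (ψ : Fin t → V → ℝ)
    (hφint : ∀ s, ∀ x ∈ E, φL s x ≤ φU s x)
    (pbar : V) (hpbarE : pbar ∈ E) (hpbarF : ∀ u, ψ u pbar ≤ 0)
    (φL' φU' : Fin l → V → ℝ)
    (hφLd : ∀ s w, HasDirDeriv (φL s) pbar w (φL' s w))
    (hφUd : ∀ s w, HasDirDeriv (φU s) pbar w (φU' s w))
    (ψ' : Fin t → V → ℝ)
    (hψd : ∀ u w, HasDirDeriv (ψ u) pbar w (ψ' u w))
    (hφLc : ∀ s, ConvexAtPt E (φL s) pbar)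
    (hφUc : ∀ s, ConvexAtPt E (φU s) pbar)
    (hψc : ∀ u, ConvexOn ℝ E (ψ u))
    -- the decomposition `Q_{t,2l}`
    (h2l : 2 * l ≤ t)
    (Q : Fin (l + l) → Finset (Fin t))
    (hQne : ∀ i, (Q i).Nonempty)
    (hQdisj : ∀ i j, i ≠ j → Disjoint (Q i) (Q j))
    (hQunion : Finset.univ.biUnion Q = Finset.univ)
    (μ : Fin t → ℝ) (hμ : ∀ u, 0 ≤ μ u)
    (hkktL : ∀ p ∈ E, ∀ s : Fin l,
      0 ≤ φL' s (p - pbar) +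
          ∑ u ∈ Q (Fin.castAdd l s), μ u * ψ' u (p - pbar))
    (hkktU : ∀ p ∈ E, ∀ s : Fin l,
      0 ≤ φU' s (p - pbar) +
          ∑ u ∈ Q (Fin.natAdd l s), μ u * ψ' u (p - pbar))
    (hcs : ∀ u, μ u * ψ u pbar = 0) :
    ¬ ∃ phat, (phat ∈ E ∧ ∀ u, ψ u phat ≤ 0) ∧
      (∀ s, LUle (φL s phat) (φU s phat) (φL s pbar) (φU s pbar)) ∧
      (∃ h, LUlt (φL h phat) (φU h phat) (φL h pbar) (φU h pbar)) := by
  rintro ⟨phat, ⟨hphatE, hphatF⟩, hle, h, hlt⟩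
  have hψle : ∀ u : Fin t, μ u * ψ' u (phat - pbar) ≤ 0 := by
    intro u
    have hψc' : ConvexAtPt E (ψ u) pbar := by
      intro q hq α hα0 hα1
      exact (hψc u).2 hpbarE hq (by linarith) hα0 (by ring)
    have h1 : ψ' u (phat - pbar) ≤ ψ u phat - ψ u pbar :=
      dirDeriv_le_sub hphatE hψc' (hψd u _)
    have h2 : μ u * ψ' u (phat - pbar) ≤ μ u * (ψ u phat - ψ u pbar) :=
      mul_le_mul_of_nonneg_left h1 (hμ u)
    have h3 : μ u * ψ u phat ≤ 0 := mul_nonpos_of_nonneg_of_nonpos (hμ u) (hphatF u)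
    have h4 := hcs u
    nlinarith
  have hsum : ∀ (S : Finset (Fin t)), ∑ u ∈ S, μ u * ψ' u (phat - pbar) ≤ 0 := fun S =>
    Finset.sum_nonpos fun u _ => hψle u
  have keyL : ∀ s : Fin l, φL s pbar ≤ φL s phat := by
    intro s
    have hA := hkktL phat hphatE s
    have h1 : φL' s (phat - pbar) ≤ φL s phat - φL s pbar :=
      dirDeriv_le_sub hphatE (hφLc s) (hφLd s _)
    have := hsum (Q (Fin.castAdd l s))
    linarith
  have keyU : ∀ s : Fin l, φU s pbar ≤ φU s phat := by
    intro s
    have hA := hkktU phat hphatE s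
    have h1 : φU' s (phat - pbar) ≤ φU s phat - φU s pbar :=
      dirDeriv_le_sub hphatE (hφUc s) (hφUd s _)
    have := hsum (Q (Fin.natAdd l s))
    linarith
  obtain ⟨⟨hL, hU⟩, hne⟩ := hlt
  rcases hne with hne | hne
  · exact hne (le_antisymm hL (keyL h))
  · exact hne (le_antisymm hU (keyU h))
end

section
/- (Theorem 3.5(a), Euclidean case.) Let p̄ ∈ F and suppose ψ_u : E → ℝ (u = 1,…,t) are convex at p̄ and directionally differentiable at p̄. Suppose there exists an index c ∈ {1,…,l} such that the interval-valued objective φ_c is LU-convex at p̄ and weakly directionally differentiable at p̄, and there exist scalars λ^L > 0, λ^U > 0 and μ_u ≥ 0 (u = 1,…,t) such that: (i) for all p ∈ E, λ^L (φ_c^L)'(p̄; p − p̄) + λ^U (φ_c^U)'(p̄; p − p̄) + Σ_{u=1}^t μ_u ψ_u'(p̄; p − p̄) ≥ 0; and (ii) μ_u ψ_u(p̄) = 0 for all u. Then p̄ is a weakly type-I Pareto optimal solution of (MIVOP2). -/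
private lemma dirDeriv_le_of_convexAtPt {V : Type*} [NormedAddCommGroup V]
    [NormedSpace ℝ V] (E : Set V) (f : V → ℝ) (pbar q : V) (hq : q ∈ E)
    (hconv : ConvexAtPt E f pbar) {d : ℝ}
    (hd : HasDirDeriv f pbar (q - pbar) d) : d ≤ f q - f pbar := by
  refine le_of_tendsto hd ?_
  filter_upwards [Ioo_mem_nhdsGT_of_mem (by norm_num : (0:ℝ) ∈ Set.Ico 0 1)] with α hα
  have h1 := hconv q hq α (le_of_lt hα.1) (le_of_lt hα.2)
  have heq : pbar + α • (q - pbar) = (1 - α) • pbar + α • q := by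
    rw [smul_sub, sub_smul, one_smul]; abel
  rw [heq, div_le_iff₀ hα.1]
  nlinarith [h1]

/-- Theorem 3.5(a), Euclidean case: KKT sufficiency, via a single
LU-convex objective `φ_c`, for weakly type-I Pareto optimal solutions. -/
theorem kkt_weak_type_I_LU_convex
    {V : Type*} [NormedAddCommGroup V] [NormedSpace ℝ V]
    (E : Set V) (hEne : E.Nonempty) (hEopen : IsOpen E) (hEconv : Convex ℝ E)
    (l t : ℕ) (φL φU : Fin l → V → ℝ) (ψ : Fin t → V → ℝ)
    (hφint : ∀ s, ∀ x ∈ E, φL s x ≤ φU s x)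
    (pbar : V) (hpbarE : pbar ∈ E) (hpbarF : ∀ u, ψ u pbar ≤ 0)
    (ψ' : Fin t → V → ℝ)
    (hψd : ∀ u w, HasDirDeriv (ψ u) pbar w (ψ' u w))
    (hψc : ∀ u, ConvexAtPt E (ψ u) pbar)
    (c : Fin l)
    (φcL' φcU' : V → ℝ)
    (hφLd : ∀ w, HasDirDeriv (φL c) pbar w (φcL' w))
    (hφUd : ∀ w, HasDirDeriv (φU c) pbar w (φcU' w))
    (hφLc : ConvexAtPt E (φL c) pbar)
    (hφUc : ConvexAtPt E (φU c) pbar)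
    (lamL lamU : ℝ) (μ : Fin t → ℝ)
    (hlamL : 0 < lamL) (hlamU : 0 < lamU) (hμ : ∀ u, 0 ≤ μ u)
    (hkkt : ∀ p ∈ E,
      0 ≤ lamL * φcL' (p - pbar) + lamU * φcU' (p - pbar)
          + ∑ u, μ u * ψ' u (p - pbar))
    (hcs : ∀ u, μ u * ψ u pbar = 0) :
    ¬ ∃ phat, (phat ∈ E ∧ ∀ u, ψ u phat ≤ 0) ∧
      (∀ s, LUlt (φL s phat) (φU s phat) (φL s pbar) (φU s pbar)) := by
  rintro ⟨phat, ⟨hphE, hphF⟩, hlt⟩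
  obtain ⟨⟨hL, hU⟩, hne⟩ := hlt c
  have hdL : φcL' (phat - pbar) ≤ φL c phat - φL c pbar :=
    dirDeriv_le_of_convexAtPt E (φL c) pbar phat hphE hφLc (hφLd _)
  have hdU : φcU' (phat - pbar) ≤ φU c phat - φU c pbar :=
    dirDeriv_le_of_convexAtPt E (φU c) pbar phat hphE hφUc (hφUd _)
  have hsum : ∑ u, μ u * ψ' u (phat - pbar) ≤ 0 := by
    refine Finset.sum_nonpos fun u _ => ?_
    have h1 : ψ' u (phat - pbar) ≤ ψ u phat - ψ u pbar :=
      dirDeriv_le_of_convexAtPt E (ψ u) pbar phat hphE (hψc u) (hψd u _)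
    have h2 := hcs u
    have h3 := hμ u
    have h4 := hphF u
    nlinarith [mul_le_mul_of_nonneg_left h1 h3, mul_nonpos_of_nonneg_of_nonpos h3 h4]
  have hk := hkkt phat hphE
  rcases hne with h | h
  · have hLlt : φL c phat < φL c pbar := lt_of_le_of_ne hL h
    nlinarith [mul_le_mul_of_nonneg_left hdL hlamL.le,
      mul_le_mul_of_nonneg_left hdU hlamU.le, mul_pos hlamL (by linarith : (0:ℝ) < φL c pbar - φL c phat)]
  · have hUlt : φU c phat < φU c pbar := lt_of_le_of_ne hU h
    nlinarith [mul_le_mul_of_nonneg_left hdL hlamL.le,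
      mul_le_mul_of_nonneg_left hdU hlamU.le, mul_pos hlamU (by linarith : (0:ℝ) < φU c pbar - φU c phat)]
end
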